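/- arXiv:1605.06430 — 4 statements merged into one kernel-verified Lean document; each statement's English description precedes it below -/
import Mathlib

section
/- If m(0)=m₀≥0, p(0)=p₀≥0 and m₀+p₀>0, then the solution (m(t),p(t)) of the system m' = κζχω p − ε m, p' = φ m ψ(p/C) − (π+ω) p satisfies m(t)>0 and p(t)>0 for all t>0. -/
open Set Filter Topology

/-- Slope lemma: positive derivative gives eventually positive slopes. -/
private lemma slope_eventually_pos {f : ℝ → ℝ} {d x : ℝ} (hf : HasDerivAt f d x)
    (hd : 0 < d) : ∀ᶠ t in 𝓝[≠] x, 0 < (f t - f x) / (t - x) := by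
  have h := hasDerivAt_iff_tendsto_slope.mp hf
  have : ∀ᶠ t in 𝓝[≠] x, slope f x t ∈ Ioi (0:ℝ) :=
    h (Ioi_mem_nhds hd)
  filter_upwards [this] with t ht
  simpa [slope_def_field, div_eq_inv_mul] using ht

/-- positivity of solutions of the mosquito life-cycle system. -/
theorem mosquito_solution_positive
    (φ ε π ω κ χ ζ C : ℝ) (hφ : 0 < φ) (hε : 0 < ε) (hπ : 0 < π) (hω : 0 < ω)
    (hκ : 0 < κ) (hχ : 0 < χ) (hζ : 0 < ζ) (hC : 0 < C)
    (ψ : ℝ → ℝ) (hψcont : Continuous ψ) (hψanti : StrictAntiOn ψ (Set.Icc 0 1))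
    (hψ0 : ψ 0 = 1) (hψ1 : ψ 1 = 0) (hψmaps : Set.MapsTo ψ (Set.Icc 0 1) (Set.Icc 0 1))
    (m p : ℝ → ℝ)
    (hm : ∀ t, 0 ≤ t → HasDerivAt m (κ * ζ * χ * ω * p t - ε * m t) t)
    (hp : ∀ t, 0 ≤ t → HasDerivAt p (φ * m t * ψ (p t / C) - (π + ω) * p t) t)
    (hm0 : 0 ≤ m 0) (hp0 : 0 ≤ p 0) (hsum : 0 < m 0 + p 0) :
    ∀ t, 0 < t → 0 < m t ∧ 0 < p t := by
  have hpc : ∀ t, 0 ≤ t → ContinuousAt p t := fun t ht => (hp t ht).continuousAt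
  -- Lemma A: if p > 0 on (0,T) then m T > 0
  have lemA : ∀ T, 0 < T → (∀ s, 0 < s → s < T → 0 < p s) → 0 < m T := by
    intro T hT hpos
    set g : ℝ → ℝ := fun t => Real.exp (ε * t) * m t with hg
    have hgd : ∀ t, 0 ≤ t → HasDerivAt g (Real.exp (ε * t) * (κ * ζ * χ * ω * p t)) t := by
      intro t ht
      have h1 : HasDerivAt (fun x : ℝ => Real.exp (ε * x)) (Real.exp (ε * t) * ε) t := by
        have := (Real.hasDerivAt_exp (ε * t)).comp t ((hasDerivAt_id t).const_mul ε)
        simpa [Function.comp_def] using this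
      have h2 := h1.mul (hm t ht)
      refine h2.congr_deriv ?_
      ring
    have hmono : StrictMonoOn g (Icc 0 T) := by
      apply strictMonoOn_of_deriv_pos (convex_Icc 0 T)
      · intro t ht
        exact ((hgd t ht.1).continuousAt).continuousWithinAt
      · intro t ht
        rw [interior_Icc] at ht
        rw [(hgd t ht.1.le).deriv]
        have := hpos t ht.1 ht.2
        positivity
    have h01 : g 0 < g T := hmono ⟨le_rfl, hT.le⟩ ⟨hT.le, le_rfl⟩ hT
    have hg0 : g 0 = m 0 := by simp [hg]
    have : 0 < g T := lt_of_le_of_lt (hg0 ▸ hm0) h01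
    have hexp : 0 < Real.exp (ε * T) := Real.exp_pos _
    rcases mul_pos_iff.mp this with ⟨_, h⟩ | ⟨h, _⟩
    · exact h
    · exact absurd hexp (not_lt.mpr h.le)
  -- p is eventually positive just right of 0
  have hev : ∀ᶠ t in 𝓝[>] (0:ℝ), 0 < p t := by
    rcases lt_or_eq_of_le hp0 with h | h
    · have := (hpc 0 le_rfl).eventually (eventually_gt_nhds h)
      exact this.filter_mono nhdsWithin_le_nhds
    · -- p 0 = 0, so m 0 > 0 and p'(0) = φ m 0 > 0
      have hm0' : 0 < m 0 := by linarith
      have hd : HasDerivAt p (φ * m 0) 0 := by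
        have := hp 0 le_rfl
        rw [← h] at this
        simpa [hψ0] using this
      have := slope_eventually_pos hd (by positivity)
      have h2 : ∀ᶠ t in 𝓝[>] (0:ℝ), 0 < (p t - p 0) / (t - 0) :=
        this.filter_mono (nhdsWithin_mono 0 (fun x hx => ne_of_gt hx))
      filter_upwards [h2, self_mem_nhdsWithin] with t ht (ht2 : 0 < t)
      have : 0 < (p t - p 0) / t := by simpa using ht
      have := mul_pos this ht2
      rw [div_mul_cancel₀ _ (ne_of_gt ht2)] at this
      linarith [this, h.symm ▸ this]
  -- Main claim: p t > 0 for all t > 0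
  have hppos : ∀ t, 0 < t → 0 < p t := by
    by_contra hcon
    push_neg at hcon
    obtain ⟨t₂, ht₂pos, ht₂⟩ := hcon
    obtain ⟨δ, hδpos, hδ⟩ := (nhdsGT_basis (0:ℝ)).eventually_iff.mp hev
    -- δ ≤ t₂
    have hδt₂ : δ ≤ t₂ := by
      by_contra hlt
      push_neg at hlt
      exact absurd (hδ ⟨ht₂pos, hlt⟩) (not_lt.mpr ht₂)
    set S : Set ℝ := Icc (δ/2) t₂ ∩ p ⁻¹' (Iic 0) with hS
    have hScl : IsClosed S := by
      apply ContinuousOn.preimage_isClosed_of_isClosed _ isClosed_Icc isClosed_Iic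
      intro t ht
      exact (hpc t (le_trans (by linarith) ht.1)).continuousWithinAt
    have hScomp : IsCompact S := isCompact_Icc.of_isClosed_subset hScl inter_subset_left
    have hSne : S.Nonempty := ⟨t₂, ⟨⟨by linarith, le_rfl⟩, ht₂⟩⟩
    set t₁ := sInf S with ht₁def
    have ht₁S : t₁ ∈ S := hScomp.sInf_mem hSne
    have ht₁pos : 0 < t₁ := lt_of_lt_of_le (by linarith) ht₁S.1.1
    -- p > 0 on (0, t₁)
    have hbelow : ∀ s, 0 < s → s < t₁ → 0 < p s := by
      intro s hs hst₁
      rcases lt_or_ge s δ with h | h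
      · exact hδ ⟨hs, h⟩
      · by_contra hps
        push_neg at hps
        have hsS : s ∈ S := ⟨⟨by linarith, le_trans hst₁.le ht₁S.1.2⟩, hps⟩
        exact absurd (csInf_le hScomp.isBounded.bddBelow hsS) (not_le.mpr hst₁)
    -- p t₁ = 0
    have hpt₁le : p t₁ ≤ 0 := ht₁S.2
    have hpt₁ : p t₁ = 0 := by
      refine le_antisymm hpt₁le ?_
      have htend : Tendsto p (𝓝[<] t₁) (𝓝 (p t₁)) :=
        (hpc t₁ ht₁pos.le).continuousWithinAt.tendsto
      refine ge_of_tendsto htend ?_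
      filter_upwards [Ioo_mem_nhdsLT_of_mem (a := 0) ⟨ht₁pos, le_rfl⟩] with s hs
      exact (hbelow s hs.1 hs.2).le
    -- m t₁ > 0, so p'(t₁) > 0
    have hmt₁ : 0 < m t₁ := lemA t₁ ht₁pos hbelow
    have hd : HasDerivAt p (φ * m t₁) t₁ := by
      have := hp t₁ ht₁pos.le
      rw [hpt₁] at this
      simpa [hψ0] using this
    have hslope := slope_eventually_pos hd (by positivity)
    have h2 : ∀ᶠ s in 𝓝[<] t₁, 0 < (p s - p t₁) / (s - t₁) :=
      hslope.filter_mono (nhdsWithin_mono t₁ (fun x hx => ne_of_lt hx))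
    have h3 : ∀ᶠ s in 𝓝[<] t₁, s ∈ Ioo (0:ℝ) t₁ :=
      Ioo_mem_nhdsLT_of_mem ⟨ht₁pos, le_rfl⟩
    obtain ⟨s, hs1, hs2⟩ := (h2.and h3).exists
    have hspos := hbelow s hs2.1 hs2.2
    -- slope positive and s < t₁ imply p s < p t₁ = 0
    have hneg : s - t₁ < 0 := by linarith [hs2.2]
    have := mul_pos hs1 (neg_pos.mpr hneg)
    have hps : p s - p t₁ < 0 := by
      by_contra hge
      push_neg at hge
      have : (p s - p t₁) / (s - t₁) ≤ 0 := div_nonpos_of_nonneg_of_nonpos hge hneg.le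
      linarith [hs1]
    rw [hpt₁] at hps
    linarith
  intro t ht
  exact ⟨lemA t ht (fun s hs1 _ => hppos s hs1), hppos t ht⟩
end

section
/- Suppose R_M > 1 and (m̃,p̃) is a nontrivial equilibrium with ψ(p̃/C) = 1/R_M, m̃ = κωζχp̃/ε > 0, and ψ'(p̃/C) < 0. Then the Jacobian at (m̃,p̃), namely [[−ε, κωζχ],[φψ(p̃/C), (φ/C)m̃ψ'(p̃/C) − (π+ω)]], has trace γ = −(ε+π+ω − (φ/C)m̃ψ'(p̃/C)) < 0, determinant χ̂ = −(εφ/C)m̃ψ'(p̃/C) > 0, and discriminant γ² − 4χ̂ = ((ε−(π+ω)) + (φ/C)m̃ψ'(p̃/C))² + 4ε(π+ω) > 0; hence both eigenvalues are real and strictly negative and (m̃,p̃) is a locally asymptotically stable node. -/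
open Matrix in
/-- stability of the nontrivial equilibrium. With ψ(p̃/C)=1/R_M,
m̃ = κωζχp̃/ε > 0 and ψ'(p̃/C) < 0, the Jacobian has negative trace, positive
determinant and positive discriminant, so both eigenvalues are real and negative. -/
theorem mosquito_nontrivial_equilibrium_stable
    (φ ε π ω κ χ ζ C : ℝ) (hφ : 0 < φ) (hε : 0 < ε) (hπ : 0 < π) (hω : 0 < ω)
    (hκ : 0 < κ) (hχ : 0 < χ) (hζ : 0 < ζ) (hC : 0 < C)
    (ψ : ℝ → ℝ) (hψanti : StrictAnti ψ)
    (RM : ℝ) (hRM : RM = κ * ω * ζ * χ * φ / (ε * (π + ω))) (hRM1 : 1 < RM)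
    (ptil mtil dψ : ℝ)
    (hψval : ψ (ptil / C) = 1 / RM)
    (hmtil : mtil = κ * ω * ζ * χ * ptil / ε) (hmtilpos : 0 < mtil)
    (hderiv : HasDerivAt ψ dψ (ptil / C)) (hdψ : dψ < 0) :
    (-(ε + π + ω - φ / C * mtil * dψ) =
        Matrix.trace !![-ε, κ * ω * ζ * χ;
          φ * ψ (ptil / C), φ / C * mtil * dψ - (π + ω)]) ∧
    -(ε + π + ω - φ / C * mtil * dψ) < 0 ∧
    0 < -(ε * φ / C) * mtil * dψ ∧
    (-(ε + π + ω - φ / C * mtil * dψ)) ^ 2 - 4 * (-(ε * φ / C) * mtil * dψ) =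
      ((ε - (π + ω)) + φ / C * mtil * dψ) ^ 2 + 4 * ε * (π + ω) ∧
    0 < (-(ε + π + ω - φ / C * mtil * dψ)) ^ 2 - 4 * (-(ε * φ / C) * mtil * dψ) ∧
    ∃ lam₁ lam₂ : ℝ, lam₁ < 0 ∧ lam₂ < 0 ∧
      ∀ lam : ℝ,
        Matrix.det (lam • (1 : Matrix (Fin 2) (Fin 2) ℝ) -
            !![-ε, κ * ω * ζ * χ;
               φ * ψ (ptil / C), φ / C * mtil * dψ - (π + ω)]) = 0 ↔
          lam = lam₁ ∨ lam = lam₂ := by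

  have hπω : 0 < π + ω := by linarith
  have hRMpos : 0 < RM := by
    rw [hRM]; positivity
  have key : κ * ω * ζ * χ * (φ * ψ (ptil / C)) = ε * (π + ω) := by
    rw [hψval, hRM]
    field_simp
  have ha : φ / C * mtil * dψ < 0 := by
    have : 0 < φ / C * mtil := by positivity
    exact mul_neg_of_pos_of_neg this hdψ
  set γ : ℝ := -(ε + π + ω - φ / C * mtil * dψ) with hγ
  set D : ℝ := -(ε * φ / C) * mtil * dψ with hD
  have hγneg : γ < 0 := by simp only [hγ]; nlinarith
  have hDpos : 0 < D := by
    have : 0 < ε * φ / C * mtil := by positivity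
    simp only [hD]; nlinarith
  have hdisc : γ ^ 2 - 4 * D = ((ε - (π + ω)) + φ / C * mtil * dψ) ^ 2 + 4 * ε * (π + ω) := by
    simp only [hγ, hD]; ring
  have hdiscpos : 0 < γ ^ 2 - 4 * D := by
    rw [hdisc]; positivity
  refine ⟨?_, hγneg, hDpos, hdisc, hdiscpos, ?_⟩
  · simp [Matrix.trace_fin_two, hγ]; ring
  · set s : ℝ := Real.sqrt (γ ^ 2 - 4 * D) with hs
    have hs0 : 0 ≤ s := Real.sqrt_nonneg _
    have hs2 : s ^ 2 = γ ^ 2 - 4 * D := Real.sq_sqrt hdiscpos.le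
    have hslt : s < -γ := by
      have h1 : s ^ 2 < (-γ) ^ 2 := by nlinarith
      nlinarith
    have hl1 : (γ + s) / 2 < 0 := div_neg_of_neg_of_pos (by linarith) two_pos
    have hl2 : (γ - s) / 2 < 0 := div_neg_of_neg_of_pos (by linarith) two_pos
    refine ⟨(γ + s) / 2, (γ - s) / 2, hl1, hl2, fun lam => ?_⟩
    have hmat : lam • (1 : Matrix (Fin 2) (Fin 2) ℝ) -
        !![-ε, κ * ω * ζ * χ; φ * ψ (ptil / C), φ / C * mtil * dψ - (π + ω)] =
        !![lam + ε, -(κ * ω * ζ * χ); -(φ * ψ (ptil / C)),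
            lam - (φ / C * mtil * dψ - (π + ω))] := by
      ext i j
      fin_cases i <;> fin_cases j <;>
        simp [Matrix.one_apply] <;> ring
    rw [hmat, Matrix.det_fin_two_of]
    have hfac : (lam + ε) * (lam - (φ / C * mtil * dψ - (π + ω))) -
        -(κ * ω * ζ * χ) * -(φ * ψ (ptil / C)) =
        (lam - (γ + s) / 2) * (lam - (γ - s) / 2) := by
      linear_combination lam * hγ - key + hs2 / 4 - hD
    rw [hfac]
    constructor
    · intro h
      rcases mul_eq_zero.mp h with h | h
      · exact Or.inl (sub_eq_zero.mp h)
      · exact Or.inr (sub_eq_zero.mp h)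
    · rintro (h | h)
      · rw [h, sub_self, zero_mul]
      · rw [h, sub_self, mul_zero]
end

section
/- The divergence of the vector field F(m,p) = (κωζχ p − εm, φ m ψ(p/C) − (π+ω)p) equals −ε + (φ m / C)ψ'(p/C) − (π+ω) and is strictly negative everywhere on Ω = {(m,p) : m ≥ 0, 0 ≤ p ≤ C}; consequently (by the Bendixson criterion) the mosquito system has no periodic orbits contained in Ω. -/
lemma first_zero_deriv_nonpos {g : ℝ → ℝ} {D τ t0 : ℝ} (h : HasDerivAt g D τ)
    (hD : 0 < D) (hgτ : g τ = 0) (ht0 : t0 < τ)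
    (hpos : ∀ s, t0 ≤ s → s < τ → 0 < g s) : False := by
  have hs := hasDerivAt_iff_tendsto_slope.mp h
  have hs' : Filter.Tendsto (slope g τ) (nhdsWithin τ (Set.Iio τ)) (nhds D) :=
    hs.mono_left (nhdsWithin_mono _ (fun x hx => ne_of_lt hx))
  have hev : ∀ᶠ s in nhdsWithin τ (Set.Iio τ), slope g τ s ≤ 0 := by
    filter_upwards [self_mem_nhdsWithin,
      mem_nhdsWithin_of_mem_nhds (isOpen_Ioi.mem_nhds ht0)] with s hslt hsgt
    have h1 : 0 < g s := hpos s (le_of_lt hsgt) hslt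
    have h2 : s - τ < 0 := sub_neg.mpr hslt
    rw [slope_def_field, hgτ]
    exact div_nonpos_of_nonneg_of_nonpos (by linarith) h2.le
  have := le_of_tendsto hs' hev
  linarith

lemma quad_invariant (a ε K : ℝ) (ha : 0 < a) (hε : 0 ≤ ε)
    (u v c d : ℝ → ℝ)
    (hu : ∀ t, HasDerivAt u (a * v t - ε * u t) t)
    (hv : ∀ t, HasDerivAt v (c t * u t + d t * v t) t)
    (hc0 : ∀ t, 0 ≤ c t) (hcK : ∀ t, c t ≤ K) (hd : ∀ t, d t ≤ 0)
    (t0 : ℝ) (hu0 : 0 ≤ u t0) (hv0 : 0 ≤ v t0) :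
    ∀ t, t0 ≤ t → 0 ≤ u t ∧ 0 ≤ v t := by
  have hK0 : 0 ≤ K := le_trans (hc0 t0) (hcK t0)
  set L := a + K + 1 with hLdef
  have hucont : Continuous u :=
    continuous_iff_continuousAt.mpr fun x => ((hu x).differentiableAt).continuousAt
  have hvcont : Continuous v :=
    continuous_iff_continuousAt.mpr fun x => ((hv x).differentiableAt).continuousAt
  intro t ht
  -- the exponential barrier
  have hE : ∀ s : ℝ, HasDerivAt (fun s => Real.exp (L * (s - t0))) (Real.exp (L * (s - t0)) * L) s := by
    intro s
    have h1 : HasDerivAt (fun s : ℝ => L * (s - t0)) L s := by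
      simpa using ((hasDerivAt_id s).sub_const t0).const_mul L
    exact (Real.hasDerivAt_exp (L * (s - t0))).comp s h1
  have key : ∀ δ : ℝ, 0 < δ →
      0 < u t + δ * Real.exp (L * (t - t0)) ∧ 0 < v t + δ * Real.exp (L * (t - t0)) := by
    intro δ hδ
    set g₁ : ℝ → ℝ := fun s => u s + δ * Real.exp (L * (s - t0)) with hg₁def
    set g₂ : ℝ → ℝ := fun s => v s + δ * Real.exp (L * (s - t0)) with hg₂def
    have hg₁c : Continuous g₁ := hucont.add (by continuity)
    have hg₂c : Continuous g₂ := hvcont.add (by continuity)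
    set S : Set ℝ := {s | s ∈ Set.Icc t0 t ∧ (g₁ s ≤ 0 ∨ g₂ s ≤ 0)} with hSdef
    by_cases hS : S.Nonempty
    · exfalso
      have hSclosed : IsClosed S := by
        have : S = Set.Icc t0 t ∩ ({s | g₁ s ≤ 0} ∪ {s | g₂ s ≤ 0}) := by
          ext s; simp [hSdef, Set.mem_setOf_eq]
        rw [this]
        exact isClosed_Icc.inter ((isClosed_le hg₁c continuous_const).union
          (isClosed_le hg₂c continuous_const))
      have hSbdd : BddBelow S := ⟨t0, fun s hs => hs.1.1⟩
      set τ := sInf S with hτdef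
      have hτS : τ ∈ S := hSclosed.csInf_mem hS hSbdd
      have hτ1 : t0 ≤ τ := hτS.1.1
      have hτt : τ ≤ t := hτS.1.2
      have ht0notS : t0 ∉ S := by
        intro h
        rcases h.2 with h' | h' <;>
        · simp only [hg₁def, hg₂def, sub_self, mul_zero, Real.exp_zero, mul_one] at h'
          linarith
      have hτ0 : t0 < τ := lt_of_le_of_ne hτ1 (fun h => ht0notS (h ▸ hτS))
      have hbelow : ∀ s, t0 ≤ s → s < τ → 0 < g₁ s ∧ 0 < g₂ s := by
        intro s hs1 hs2
        have hnot : s ∉ S := fun h => absurd (csInf_le hSbdd h) (not_le.mpr hs2)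
        have hsmem : s ∈ Set.Icc t0 t := ⟨hs1, le_trans hs2.le hτt⟩
        by_contra hcon
        push_neg at hcon
        rcases le_or_gt (g₁ s) 0 with h' | h'
        · exact hnot ⟨hsmem, Or.inl h'⟩
        · exact hnot ⟨hsmem, Or.inr (hcon h')⟩
      -- limits from the left give nonnegativity at τ
      have hne : (nhdsWithin τ (Set.Iio τ)).NeBot := inferInstance
      have hleft : ∀ {g : ℝ → ℝ}, Continuous g → (∀ s, t0 ≤ s → s < τ → 0 < g s) → 0 ≤ g τ := by
        intro g hgc hgpos
        have htend : Filter.Tendsto g (nhdsWithin τ (Set.Iio τ)) (nhds (g τ)) :=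
          (hgc.continuousAt).continuousWithinAt
        refine ge_of_tendsto htend ?_
        filter_upwards [self_mem_nhdsWithin,
          mem_nhdsWithin_of_mem_nhds (isOpen_Ioi.mem_nhds hτ0)] with s hs1 hs2
        exact (hgpos s hs2.le hs1).le
      have hg₁τ : 0 ≤ g₁ τ := hleft hg₁c (fun s h1 h2 => (hbelow s h1 h2).1)
      have hg₂τ : 0 ≤ g₂ τ := hleft hg₂c (fun s h1 h2 => (hbelow s h1 h2).2)
      set E := Real.exp (L * (τ - t0)) with hEdef
      have hEpos : 0 < E := Real.exp_pos _
      rcases hτS.2 with hzero | hzero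
      · -- g₁ τ = 0
        have hg₁eq : g₁ τ = 0 := le_antisymm hzero hg₁τ
        have huτ : u τ = -δ * E := by
          have : u τ + δ * E = 0 := hg₁eq
          linarith
        have hvτ : -δ * E ≤ v τ := by
          have : 0 ≤ v τ + δ * E := hg₂τ
          linarith
        have hD : 0 < (a * v τ - ε * u τ) + δ * (E * L) := by
          have h1 : a * (-δ * E) ≤ a * v τ := by nlinarith
          nlinarith [mul_pos hδ hEpos]
        have hder : HasDerivAt g₁ ((a * v τ - ε * u τ) + δ * (E * L)) τ :=
          (hu τ).add (((hE τ).const_mul δ).congr_deriv (by rw [hEdef]))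
        exact first_zero_deriv_nonpos hder hD hg₁eq hτ0 (fun s h1 h2 => (hbelow s h1 h2).1)
      · -- g₂ τ = 0
        have hg₂eq : g₂ τ = 0 := le_antisymm hzero hg₂τ
        have hvτ : v τ = -δ * E := by
          have : v τ + δ * E = 0 := hg₂eq
          linarith
        have huτ : -δ * E ≤ u τ := by
          have : 0 ≤ u τ + δ * E := hg₁τ
          linarith
        have hD : 0 < (c τ * u τ + d τ * v τ) + δ * (E * L) := by
          have h1 : c τ * (-δ * E) ≤ c τ * u τ :=
            mul_le_mul_of_nonneg_left huτ (hc0 τ)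
          have h2 : K * (-δ * E) ≤ c τ * (-δ * E) :=
            mul_le_mul_of_nonpos_right (hcK τ) (by nlinarith)
          have h3 : 0 ≤ d τ * v τ := by
            have := mul_nonneg (neg_nonneg.mpr (hd τ)) (le_of_lt (mul_pos hδ hEpos))
            rw [hvτ]; nlinarith
          nlinarith [mul_pos hδ hEpos]
        have hder : HasDerivAt g₂ ((c τ * u τ + d τ * v τ) + δ * (E * L)) τ :=
          (hv τ).add (((hE τ).const_mul δ).congr_deriv (by rw [hEdef]))
        exact first_zero_deriv_nonpos hder hD hg₂eq hτ0 (fun s h1 h2 => (hbelow s h1 h2).2)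
    · have htnot : t ∉ S := fun h => hS ⟨t, h⟩
      have : ¬ (g₁ t ≤ 0 ∨ g₂ t ≤ 0) := fun h => htnot ⟨⟨ht, le_refl t⟩, h⟩
      push_neg at this
      exact ⟨this.1, this.2⟩
  constructor
  · by_contra hcon
    push_neg at hcon
    set E := Real.exp (L * (t - t0)) with hEdef
    have hEpos : 0 < E := Real.exp_pos _
    have hδ : 0 < -u t / (2 * E) := div_pos (by linarith) (by positivity)
    have h := (key _ hδ).1
    have : -u t / (2 * E) * E = -u t / 2 := by field_simp
    rw [this] at h
    linarith
  · by_contra hcon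
    push_neg at hcon
    set E := Real.exp (L * (t - t0)) with hEdef
    have hEpos : 0 < E := Real.exp_pos _
    have hδ : 0 < -v t / (2 * E) := div_pos (by linarith) (by positivity)
    have h := (key _ hδ).2
    have : -v t / (2 * E) * E = -v t / 2 := by field_simp
    rw [this] at h
    linarith


lemma periodic_const_of_deriv_nonneg {f f' : ℝ → ℝ} {T t0 : ℝ} (hT : 0 < T)
    (hf : ∀ t, HasDerivAt f (f' t) t) (hper : ∀ t, f (t + T) = f t)
    (hmono : ∀ t, t0 ≤ t → 0 ≤ f' t) : ∀ t, f t = f t0 := by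
  have hdiff : Differentiable ℝ f := fun x => (hf x).differentiableAt
  have hmonoOn : MonotoneOn f (Set.Ici t0) := by
    apply monotoneOn_of_deriv_nonneg (convex_Ici t0) hdiff.continuous.continuousOn
      (hdiff.differentiableOn)
    intro x hx
    rw [interior_Ici] at hx
    rw [(hf x).deriv]
    exact hmono x (le_of_lt hx)
  have hconst : ∀ s, s ∈ Set.Icc t0 (t0 + T) → f s = f t0 := by
    intro s hs
    have h1 : f t0 ≤ f s := hmonoOn (Set.self_mem_Ici) (Set.mem_Ici.mpr hs.1) hs.1
    have h2 : f s ≤ f (t0 + T) := hmonoOn (Set.mem_Ici.mpr hs.1) (Set.mem_Ici.mpr (by linarith)) hs.2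
    have h3 : f (t0 + T) = f t0 := hper t0
    linarith
  intro t
  obtain ⟨y, hy, hfy⟩ := Function.Periodic.exists_mem_Ico (f := f) (c := T) hper hT t t0
  rw [hfy]
  exact hconst y ⟨hy.1, hy.2.le⟩


/-- the divergence of the vector field is strictly negative on Ω, and
consequently (Bendixson) there is no nonconstant periodic solution lying in Ω. -/
theorem mosquito_no_periodic_orbits
    (φ ε π ω κ χ ζ C : ℝ) (hφ : 0 < φ) (hε : 0 < ε) (hπ : 0 < π) (hω : 0 < ω)
    (hκ : 0 < κ) (hχ : 0 < χ) (hζ : 0 < ζ) (hC : 0 < C)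
    (ψ dψ : ℝ → ℝ) (hψ : ∀ x, HasDerivAt ψ (dψ x) x)
    (hdψ : ∀ x ∈ Set.Icc (0:ℝ) 1, dψ x ≤ 0) :
    (∀ m p : ℝ, 0 ≤ m → 0 ≤ p → p ≤ C →
      -ε + φ * m / C * dψ (p / C) - (π + ω) < 0) ∧
    ¬ ∃ (m p : ℝ → ℝ) (T : ℝ), 0 < T ∧
        (∀ t : ℝ, HasDerivAt m (κ * ω * ζ * χ * p t - ε * m t) t) ∧
        (∀ t : ℝ, HasDerivAt p (φ * m t * ψ (p t / C) - (π + ω) * p t) t) ∧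
        (∀ t : ℝ, 0 ≤ m t ∧ 0 ≤ p t ∧ p t ≤ C) ∧
        (∀ t : ℝ, m (t + T) = m t ∧ p (t + T) = p t) ∧
        ¬ (∀ t : ℝ, m t = m 0 ∧ p t = p 0) := by
  constructor
  · intro m p hm hp hpC
    have h0 : p / C ∈ Set.Icc (0:ℝ) 1 := ⟨div_nonneg hp hC.le, (div_le_one hC).mpr hpC⟩
    have h1 : dψ (p / C) ≤ 0 := hdψ _ h0
    have h2 : φ * m / C * dψ (p / C) ≤ 0 := by
      nlinarith [mul_nonneg (show (0:ℝ) ≤ φ * m / C by positivity) (neg_nonneg.mpr h1)]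
    linarith
  rintro ⟨m, p, T, hT, hm, hp, hbox, hper, hnc⟩
  apply hnc
  set A := κ * ω * ζ * χ with hAdef
  set B := π + ω with hBdef
  have hApos : 0 < A := by positivity
  have hBpos : 0 < B := by positivity
  have hmc : Continuous m :=
    continuous_iff_continuousAt.mpr fun x => ((hm x).differentiableAt).continuousAt
  have hpc : Continuous p :=
    continuous_iff_continuousAt.mpr fun x => ((hp x).differentiableAt).continuousAt
  have hψc : Continuous ψ :=
    continuous_iff_continuousAt.mpr fun x => ((hψ x).differentiableAt).continuousAt
  have hmem : ∀ t, p t / C ∈ Set.Icc (0:ℝ) 1 := fun t =>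
    ⟨div_nonneg (hbox t).2.1 hC.le, (div_le_one hC).mpr (hbox t).2.2⟩
  have hperm : Function.Periodic m T := fun t => (hper t).1
  have hperp : Function.Periodic p T := fun t => (hper t).2
  -- global maximum of p
  obtain ⟨t1, ht1mem, ht1max⟩ := isCompact_Icc.exists_isMaxOn (s := Set.Icc 0 T)
    (Set.nonempty_Icc.mpr hT.le) hpc.continuousOn
  have hpmax : ∀ t, p t ≤ p t1 := by
    intro t
    obtain ⟨y, hy, hpy⟩ := Function.Periodic.exists_mem_Ico hperp hT t 0
    rw [hpy]
    exact ht1max ⟨hy.1, by linarith [hy.2]⟩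
  have hd1 : φ * m t1 * ψ (p t1 / C) - B * p t1 = 0 :=
    IsLocalMax.hasDerivAt_eq_zero (Filter.Eventually.of_forall hpmax) (hp t1)
  rcases lt_or_ge (ψ (p t1 / C)) 0 with hcase | hcase
  · -- Case A : ψ < 0 at the max of p, so p ≡ 0 and m decays
    have hpt1 : p t1 = 0 := by
      nlinarith [mul_nonneg (mul_nonneg hφ.le (hbox t1).1) (neg_nonneg.mpr hcase.le),
        (hbox t1).2.1]
    have hp0 : ∀ t, p t = 0 := fun t =>
      le_antisymm (by rw [← hpt1]; exact hpmax t) (hbox t).2.1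
    set n : ℝ → ℝ := fun t => m t * Real.exp (ε * t) with hndef
    have hn : ∀ t, HasDerivAt n 0 t := by
      intro t
      have he : HasDerivAt (fun t : ℝ => Real.exp (ε * t)) (Real.exp (ε * t) * ε) t := by
        exact ((Real.hasDerivAt_exp (ε * t)).comp t ((hasDerivAt_id t).const_mul ε)).congr_deriv (by ring)
      have h2 := (hm t).mul he
      exact h2.congr_deriv (by rw [hp0 t]; ring)
    have hnconst : ∀ s t : ℝ, n s = n t := fun s t =>
      is_const_of_deriv_eq_zero (fun x => (hn x).differentiableAt) (fun x => (hn x).deriv) s t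
    have hm0 : m 0 = 0 := by
      have h1 : n T = n 0 := hnconst T 0
      have h2 : m T = m 0 := by have := hperm 0; rwa [zero_add] at this
      have hexp : 1 < Real.exp (ε * T) := by
        nlinarith [Real.add_one_le_exp (ε * T), mul_pos hε hT]
      simp only [hndef, h2, mul_zero, Real.exp_zero, mul_one] at h1
      nlinarith
    have hmall : ∀ t, m t = 0 := by
      intro t
      have h1 : n t = n 0 := hnconst t 0
      simp only [hndef, hm0, mul_zero, Real.exp_zero, mul_one, zero_mul] at h1
      have h3 := Real.exp_pos (ε * t)
      rcases mul_eq_zero.mp h1 with h | h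
      · exact h
      · exact absurd h (ne_of_gt h3)
    intro t
    exact ⟨by rw [hmall t, hmall 0], by rw [hp0 t, hp0 0]⟩
  · -- Case B : cooperative system
    have hanti : AntitoneOn ψ (Set.Icc (0:ℝ) 1) := by
      apply antitoneOn_of_deriv_nonpos (convex_Icc 0 1) hψc.continuousOn
        (fun x _ => (hψ x).differentiableAt.differentiableWithinAt)
      intro x hx
      rw [interior_Icc] at hx
      rw [(hψ x).deriv]
      exact hdψ x ⟨hx.1.le, hx.2.le⟩
    have hψnn : ∀ t, 0 ≤ ψ (p t / C) := by
      intro t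
      refine le_trans hcase (hanti (hmem t) (hmem t1) ?_)
      gcongr
      exact hpmax t
    -- bound for the coupling coefficient
    obtain ⟨x0, hx0mem, hx0max⟩ := isCompact_Icc.exists_isMaxOn (s := Set.Icc (0:ℝ) 1)
      ⟨0, Set.left_mem_Icc.mpr zero_le_one⟩ hψc.continuousOn
    -- global maximum of m
    obtain ⟨t2, ht2mem, ht2max⟩ := isCompact_Icc.exists_isMaxOn (s := Set.Icc 0 T)
      (Set.nonempty_Icc.mpr hT.le) hmc.continuousOn
    have hmmax : ∀ t, m t ≤ m t2 := by
      intro t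
      obtain ⟨y, hy, hmy⟩ := Function.Periodic.exists_mem_Ico hperm hT t 0
      rw [hmy]
      exact ht2max ⟨hy.1, by linarith [hy.2]⟩
    have hu2 : A * p t2 - ε * m t2 = 0 :=
      IsLocalMax.hasDerivAt_eq_zero (Filter.Eventually.of_forall hmmax) (hm t2)
    -- derivatives of u = m' and v = p'
    have hU : ∀ t, HasDerivAt (fun s => A * p s - ε * m s)
        (A * (φ * m t * ψ (p t / C) - B * p t) - ε * (A * p t - ε * m t)) t := by
      intro t
      exact ((hp t).const_mul A).sub ((hm t).const_mul ε)
    have hV : ∀ t, HasDerivAt (fun s => φ * m s * ψ (p s / C) - B * p s)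
        ((φ * ψ (p t / C)) * (A * p t - ε * m t) +
          (φ * m t * dψ (p t / C) / C - B) * (φ * m t * ψ (p t / C) - B * p t)) t := by
      intro t
      have h1 : HasDerivAt (fun s => p s / C)
          ((φ * m t * ψ (p t / C) - B * p t) / C) t := (hp t).div_const C
      have h2 := (hψ (p t / C)).comp t h1
      have h3 := (((hm t).const_mul φ).mul h2).sub ((hp t).const_mul B)
      simp only [Function.comp] at h3
      exact h3.congr_deriv (by ring)
    have hc0 : ∀ t, 0 ≤ φ * ψ (p t / C) := fun t => mul_nonneg hφ.le (hψnn t)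
    have hcK : ∀ t, φ * ψ (p t / C) ≤ φ * ψ x0 := fun t =>
      mul_le_mul_of_nonneg_left (hx0max (hmem t)) hφ.le
    have hdle : ∀ t, φ * m t * dψ (p t / C) / C - B ≤ 0 := by
      intro t
      have h1 : φ * m t * dψ (p t / C) ≤ 0 := by
        nlinarith [mul_nonneg (mul_nonneg hφ.le (hbox t).1)
          (neg_nonneg.mpr (hdψ _ (hmem t)))]
      have h2 : φ * m t * dψ (p t / C) / C ≤ 0 := div_nonpos_of_nonpos_of_nonneg h1 hC.le
      linarith
    rcases le_total 0 (φ * m t2 * ψ (p t2 / C) - B * p t2) with hv2 | hv2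
    · have hQ := quad_invariant A ε (φ * ψ x0) hApos hε.le
        (fun s => A * p s - ε * m s) (fun s => φ * m s * ψ (p s / C) - B * p s)
        (fun s => φ * ψ (p s / C)) (fun s => φ * m s * dψ (p s / C) / C - B)
        hU hV hc0 hcK hdle t2 (le_of_eq hu2.symm) hv2
      have hmconst := periodic_const_of_deriv_nonneg (t0 := t2) hT hm hperm
        (fun t ht => (hQ t ht).1)
      have hpconst := periodic_const_of_deriv_nonneg (t0 := t2) hT hp hperp
        (fun t ht => (hQ t ht).2)
      intro t
      exact ⟨(hmconst t).trans (hmconst 0).symm, (hpconst t).trans (hpconst 0).symm⟩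
    · have hU' : ∀ t, HasDerivAt (fun s => -(A * p s - ε * m s))
          (A * (-(φ * m t * ψ (p t / C) - B * p t)) - ε * (-(A * p t - ε * m t))) t := by
        intro t
        have := (hU t).neg
        exact this.congr_deriv (by ring)
      have hV' : ∀ t, HasDerivAt (fun s => -(φ * m s * ψ (p s / C) - B * p s))
          ((φ * ψ (p t / C)) * (-(A * p t - ε * m t)) +
            (φ * m t * dψ (p t / C) / C - B) * (-(φ * m t * ψ (p t / C) - B * p t))) t := by
        intro t
        have := (hV t).neg
        exact this.congr_deriv (by ring)
      have hQ := quad_invariant A ε (φ * ψ x0) hApos hε.le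
        (fun s => -(A * p s - ε * m s)) (fun s => -(φ * m s * ψ (p s / C) - B * p s))
        (fun s => φ * ψ (p s / C)) (fun s => φ * m s * dψ (p s / C) / C - B)
        hU' hV' hc0 hcK hdle t2 (by simp [hu2]) (by simpa using hv2)
      have hmconst := periodic_const_of_deriv_nonneg (t0 := t2) hT
        (f := fun s => -(m s)) (f' := fun s => -(A * p s - ε * m s))
        (fun t => (hm t).neg) (fun t => by simp [hperm t]) (fun t ht => (hQ t ht).1)
      have hpconst := periodic_const_of_deriv_nonneg (t0 := t2) hT
        (f := fun s => -(p s)) (f' := fun s => -(φ * m s * ψ (p s / C) - B * p s))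
        (fun t => (hp t).neg) (fun t => by simp [hperp t]) (fun t ht => (hQ t ht).2)
      intro t
      have h1 : -(m t) = -(m 0) := (hmconst t).trans (hmconst 0).symm
      have h2 : -(p t) = -(p 0) := (hpconst t).trans (hpconst 0).symm
      exact ⟨by linarith, by linarith⟩
end

section
/- For ψ(x) = 1 − x, if R_M > 1 the mosquito system has exactly two equilibria in Ω: (0,0) and (m̃,p̃) = (C(κωζχ/ε)((R_M−1)/R_M), C(R_M−1)/R_M); if 0 < R_M ≤ 1, the only equilibrium in Ω is (0,0). -/
/-- for ψ(x) = 1 − x, the equilibria in Ω are exactly (0,0) and,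
when R_M > 1, additionally (C(κωζχ/ε)(R_M−1)/R_M, C(R_M−1)/R_M). -/
theorem mosquito_logistic_equilibria
    (φ ε π ω κ χ ζ C : ℝ) (hφ : 0 < φ) (hε : 0 < ε) (hπ : 0 < π) (hω : 0 < ω)
    (hκ : 0 < κ) (hχ : 0 < χ) (hζ : 0 < ζ) (hC : 0 < C)
    (RM : ℝ) (hRM : RM = κ * ω * ζ * χ * φ / (ε * (π + ω))) :
    (1 < RM → ∀ m p : ℝ, 0 ≤ m → 0 ≤ p → p ≤ C →
      ((κ * ω * ζ * χ * p - ε * m = 0 ∧ φ * m * (1 - p / C) - (π + ω) * p = 0) ↔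
        ((m = 0 ∧ p = 0) ∨
          (m = C * (κ * ω * ζ * χ / ε) * ((RM - 1) / RM) ∧ p = C * ((RM - 1) / RM))))) ∧
    (RM ≤ 1 → ∀ m p : ℝ, 0 ≤ m → 0 ≤ p → p ≤ C →
      ((κ * ω * ζ * χ * p - ε * m = 0 ∧ φ * m * (1 - p / C) - (π + ω) * p = 0) ↔
        (m = 0 ∧ p = 0))) := by
  have hπω : 0 < π + ω := by linarith
  have hA : 0 < κ * ω * ζ * χ := by positivity
  have hRMpos : 0 < RM := by rw [hRM]; positivity
  have key : ∀ m p : ℝ,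
      (κ * ω * ζ * χ * p - ε * m = 0 ∧ φ * m * (1 - p / C) - (π + ω) * p = 0) →
      (m = κ * ω * ζ * χ * p / ε ∧
        (p = 0 ∨ φ * (κ * ω * ζ * χ) * (C - p) = ε * (π + ω) * C)) := by
    intro m p ⟨h1, h2⟩
    have hm : m = κ * ω * ζ * χ * p / ε := by field_simp; linarith
    refine ⟨hm, ?_⟩
    subst hm
    have h3 : p * (φ * (κ * ω * ζ * χ) * (C - p) - ε * (π + ω) * C) = 0 := by
      have := h2
      field_simp at this
      nlinarith [this]
    rcases mul_eq_zero.mp h3 with h | h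
    · exact Or.inl h
    · exact Or.inr (by linarith)
  constructor
  · intro h1RM m p hm hp hpC
    constructor
    · intro h
      obtain ⟨hmE, hcase⟩ := key m p h
      rcases hcase with hp0 | heq
      · left; constructor
        · rw [hmE, hp0]; simp
        · exact hp0
      · right
        have hpval : p = C * ((RM - 1) / RM) := by
          subst hRM
          field_simp at heq ⊢
          nlinarith [heq]
        constructor
        · rw [hmE, hpval]; field_simp
        · exact hpval
    · rintro (⟨hm0, hp0⟩ | ⟨hmE, hpE⟩)
      · subst hm0; subst hp0; norm_num
      · subst hmE; subst hpE; subst hRM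
        constructor
        · field_simp; ring
        · field_simp
          ring_nf
  · intro hle m p hm hp hpC
    constructor
    · intro h
      obtain ⟨hmE, hcase⟩ := key m p h
      have hAφ : κ * ω * ζ * χ * φ ≤ ε * (π + ω) := by
        rw [hRM] at hle
        have := (div_le_one (by positivity)).mp hle
        linarith
      have hp0 : p = 0 := by
        rcases hcase with h | h
        · exact h
        · have hnp : ¬ 0 < p := fun hpp => by
            nlinarith [mul_le_mul_of_nonneg_right hAφ hC.le,
              mul_pos (mul_pos hφ hA) hpp]
          exact le_antisymm (not_lt.mp hnp) hp
      constructor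
      · rw [hmE, hp0]; simp
      · exact hp0
    · rintro ⟨hm0, hp0⟩; subst hm0; subst hp0; norm_num
end
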